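/- For every even n ≥ 2 there exists a ∈ {0, 1, ..., n} such that the balanced Varshamov–Tenengolts code BVT_a(n) = {(x_1,...,x_n) ∈ U_n : Σ_{i=1}^n i·x_i ≡ a (mod n+1)} has size at least C(n, n/2)/(n+1), and for every a the code BVT_a(n) has pairwise disjoint single-deletion balls: |B^D(x) ∩ B^D(y)| = 0 for all distinct x, y ∈ BVT_a(n). -/

import Mathlib

namespace BRC

/-- Hamming distance between two binary words (of the same length). -/
def hammingDist (x y : List Bool) : ℕ :=
  (List.zip x y).countP (fun p => p.1 != p.2)

/-- `balanced n` is the set `U_n` of binary words of length `n` with exactly `n/2` ones. -/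
def balanced (n : ℕ) : Set (List Bool) :=
  {x | x.length = n ∧ x.count true = n / 2}

/-- `B^S(x)`: words obtained from `x` by at most one substitution. -/
def BS (x : List Bool) : Set (List Bool) :=
  {y | y.length = x.length ∧ hammingDist x y ≤ 1}

/-- `B^D(x)`: words obtained from `x` by deleting one symbol. -/
def BD (x : List Bool) : Set (List Bool) :=
  {y | ∃ (u v : List Bool) (b : Bool), x = u ++ b :: v ∧ y = u ++ v}

/-- `B^I(x)`: words obtained from `x` by inserting one symbol. -/
def BI (x : List Bool) : Set (List Bool) :=
  {y | ∃ (u v : List Bool) (b : Bool), x = u ++ v ∧ y = u ++ b :: v}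

def BDI (x : List Bool) : Set (List Bool) := BD x ∪ BI x
def BSD (x : List Bool) : Set (List Bool) := BS x ∪ BD x
def BSI (x : List Bool) : Set (List Bool) := BS x ∪ BI x
def Bedit (x : List Bool) : Set (List Bool) := BS x ∪ BD x ∪ BI x

/-- `C` is a balanced `(n,N;B)`-reconstruction code: `C ⊆ U_n` and `ν(C;B) < N`. -/
def reconCode (n N : ℕ) (B : List Bool → Set (List Bool)) (C : Set (List Bool)) : Prop :=
  C ⊆ balanced n ∧ ∀ x ∈ C, ∀ y ∈ C, x ≠ y → (B x ∩ B y).ncard < N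

/-- `ρ_b(n,N;B)`: optimal redundancy of a balanced `(n,N;B)`-reconstruction code. -/
noncomputable def rho (n N : ℕ) (B : List Bool → Set (List Bool)) : ℝ :=
  sInf {r : ℝ | ∃ C : Set (List Bool),
    reconCode n N B C ∧ r = (n : ℝ) - Real.logb 2 (C.ncard : ℝ)}

/-- `(10)^m`. -/
def pat10 (m : ℕ) : List Bool := (List.replicate m [true, false]).flatten
/-- `(01)^m`. -/
def pat01 (m : ℕ) : List Bool := (List.replicate m [false, true]).flatten

/-- Type-A-confusable with parameter `m`: `{c, c'} = {(10)^m, (01)^m}`. -/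
def TypeAWith (m : ℕ) (x y : List Bool) : Prop :=
  ∃ u v : List Bool,
    (x = u ++ pat10 m ++ v ∧ y = u ++ pat01 m ++ v) ∨
    (x = u ++ pat01 m ++ v ∧ y = u ++ pat10 m ++ v)

/-- Type-A-confusable (with some `m ≥ 1`). -/
def TypeA (x y : List Bool) : Prop := ∃ m, 1 ≤ m ∧ TypeAWith m x y

/-- Type-B-confusable with parameter `m`:
`{c, c'} = {0 1^m, 1^m 0}` or `{c, c'} = {1 0^m, 0^m 1}`. -/
def TypeBWith (m : ℕ) (x y : List Bool) : Prop :=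
  ∃ u v : List Bool,
    ((x = u ++ (false :: List.replicate m true) ++ v ∧
        y = u ++ (List.replicate m true ++ [false]) ++ v) ∨
     (x = u ++ (List.replicate m true ++ [false]) ++ v ∧
        y = u ++ (false :: List.replicate m true) ++ v)) ∨
    ((x = u ++ (true :: List.replicate m false) ++ v ∧
        y = u ++ (List.replicate m false ++ [true]) ++ v) ∨
     (x = u ++ (List.replicate m false ++ [true]) ++ v ∧
        y = u ++ (true :: List.replicate m false) ++ v))

/-- Type-B-confusable (with some `m ≥ 2`). -/
def TypeB (x y : List Bool) : Prop := ∃ m, 2 ≤ m ∧ TypeBWith m x y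

/-- Number of runs of a binary word. -/
def numRuns (x : List Bool) : ℕ := (x.destutter (· ≠ ·)).length

/-- `V_{n-1}`: binary words of length `n-1` with Hamming weight `n/2` or `n/2 - 1`. -/
def Vset (n : ℕ) : Set (List Bool) :=
  {x | x.length = n - 1 ∧ (x.count true = n / 2 ∨ x.count true = n / 2 - 1)}

/-- VT weighted sum `Σ_{i=1}^n i·x_i` (positions indexed from 1). -/
def vtSum (x : List Bool) : ℕ :=
  (x.zipIdx.map (fun p => if p.1 then p.2 + 1 else 0)).sum

/-- The balanced Varshamov–Tenengolts code `BVT_a(n)`. -/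
def BVT (n a : ℕ) : Set (List Bool) :=
  {x | x ∈ balanced n ∧ vtSum x ≡ a [MOD n + 1]}

/-- `R_2^b(n,1,m)`: balanced words of length `n` all of whose runs have length at most `m`. -/
def R1 (n m : ℕ) : Set (List Bool) :=
  {x | x ∈ balanced n ∧ ∀ b : Bool, ¬ (List.replicate (m + 1) b <:+: x)}


lemma vtSum_enumFrom (t : List Bool) : ∀ k,
    (List.map (fun p : Bool × ℕ => if p.1 then p.2 + 1 else 0) (List.zipIdx t k)).sum
      = vtSum t + k * t.count true := by
  induction t with
  | nil => intro k; simp [vtSum]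
  | cons b t ih =>
    intro k
    have h0 := ih 0
    have hk := ih (k+1)
    have h1 := ih 1
    simp only [List.zipIdx_cons, List.map_cons, List.sum_cons] at *
    have hv : vtSum (b :: t) = (if b then 1 else 0) + (vtSum t + 1 * t.count true) := by
      unfold vtSum
      rw [show (b :: t).zipIdx = List.zipIdx (b :: t) 0 from rfl, List.zipIdx_cons,
        List.map_cons, List.sum_cons, h1]
      simp [vtSum]
    rw [hk, hv, List.count_cons]
    cases b <;> simp <;> ring

lemma vtSum_cons (a : Bool) (t : List Bool) :
    vtSum (a :: t) = (if a then 1 else 0) + vtSum t + t.count true := by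
  unfold vtSum
  rw [show (a :: t).zipIdx = List.zipIdx (a :: t) 0 from rfl, List.zipIdx_cons,
    List.map_cons, List.sum_cons, vtSum_enumFrom t 1]
  simp [vtSum]; ring

lemma vtSum_append (p q : List Bool) :
    vtSum (p ++ q) = vtSum p + vtSum q + p.length * q.count true := by
  induction p with
  | nil => simp [vtSum]
  | cons a p ih =>
    simp only [List.cons_append, vtSum_cons, ih, List.count_append, List.length_cons]
    ring

lemma vt_helper (u w v' : List Bool) (b b' : Bool)
    (hmod : vtSum (u ++ b :: (w ++ v')) ≡ vtSum ((u ++ w) ++ b' :: v')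
      [MOD (u ++ b :: (w ++ v')).length + 1]) :
    u ++ b :: (w ++ v') = (u ++ w) ++ b' :: v' := by
  set i := u.length
  set k := w.length
  set w1 := w.count true with hw1
  have hwk : w1 ≤ k := List.count_le_length
  have hn : (u ++ b :: (w ++ v')).length = i + 1 + k + v'.length := by
    simp [List.length_append]; omega
  -- compute both vt sums
  have hx : vtSum (u ++ b :: (w ++ v')) =
      vtSum u + vtSum w + vtSum v' + k * v'.count true
        + (if b then 1 else 0) * (i + 1) + (w1 + v'.count true)
        + i * (w1 + v'.count true) := by
    rw [vtSum_append, vtSum_cons, vtSum_append]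
    simp [List.count_append, List.count_cons]
    cases b <;> simp <;> ring
  have hy : vtSum ((u ++ w) ++ b' :: v') =
      vtSum u + vtSum w + vtSum v' + k * v'.count true
        + (if b' then 1 else 0) * (i + k + 1) + v'.count true
        + i * (w1 + v'.count true) := by
    rw [vtSum_append, vtSum_append, vtSum_cons]
    simp [List.count_append, List.count_cons, List.length_append]
    cases b' <;> simp <;> ring
  set S := vtSum u + vtSum w + vtSum v' + k * v'.count true + v'.count true
    + i * (w1 + v'.count true) with hS
  have hx' : vtSum (u ++ b :: (w ++ v')) = S + ((if b then 1 else 0) * (i + 1) + w1) := by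
    rw [hx]; ring
  have hy' : vtSum ((u ++ w) ++ b' :: v') = S + (if b' then 1 else 0) * (i + k + 1) := by
    rw [hy]; ring
  set A := (if b then 1 else 0) * (i + 1) + w1 with hA
  set B := (if b' then 1 else 0) * (i + k + 1) with hB
  have hAB : A ≡ B [MOD (u ++ b :: (w ++ v')).length + 1] := by
    have := hmod
    rw [hx', hy'] at this
    exact (Nat.ModEq.add_left_cancel' S this)
  have hAlt : A < (u ++ b :: (w ++ v')).length + 1 := by
    rw [hn, hA]; cases b <;> simp <;> omega
  have hBlt : B < (u ++ b :: (w ++ v')).length + 1 := by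
    rw [hn, hB]; cases b' <;> simp <;> omega
  have hABeq : A = B := by
    have h1 : A % ((u ++ b :: (w ++ v')).length + 1) = A := Nat.mod_eq_of_lt hAlt
    have h2 : B % ((u ++ b :: (w ++ v')).length + 1) = B := Nat.mod_eq_of_lt hBlt
    rw [Nat.ModEq] at hAB; omega
  -- case analysis
  have key : b :: w = w ++ [b'] := by
    rw [hA, hB] at hABeq
    cases b <;> cases b' <;>
      simp only [if_true, Bool.false_eq_true, if_false, one_mul, zero_mul, zero_add] at hABeq
    · -- b=f b'=f : gives w1 = 0
      have hw0 : w.count true = 0 := by omega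
      have : w = List.replicate k false := by
        apply List.eq_replicate_of_mem
        intro c hc
        cases c
        · rfl
        · exact absurd (List.count_pos_iff.mpr hc) (by omega)
      rw [this]
      simp [List.replicate_succ, ← List.replicate_succ']
    · exfalso; omega
    · exfalso; omega
    · have hwk' : w.count true = k := by omega
      have : w = List.replicate k true := by
        have hlen : List.count true w = w.length := hwk'
        have hall := List.count_eq_length.mp hlen
        exact List.eq_replicate_of_mem (fun c hc => (hall c hc).symm)
      rw [this]
      simp [List.replicate_succ, ← List.replicate_succ']
  calc u ++ b :: (w ++ v') = u ++ (b :: w) ++ v' := by simp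
    _ = u ++ (w ++ [b']) ++ v' := by rw [key]
    _ = (u ++ w) ++ b' :: v' := by simp


lemma split_lists (u v u' v' : List Bool) (h : u ++ v = u' ++ v')
    (hle : u.length ≤ u'.length) : ∃ w, u' = u ++ w ∧ v = w ++ v' := by
  refine ⟨u'.drop u.length, ?_, ?_⟩
  · have h1 : u = u'.take u.length := by
      have h2 := congrArg (List.take u.length) h
      rwa [List.take_left, List.take_append_of_le_length hle] at h2
    calc u' = u'.take u.length ++ u'.drop u.length := (List.take_append_drop _ _).symm
      _ = u ++ u'.drop u.length := by rw [← h1]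
  · have h1 : u = u'.take u.length := by
      have h2 := congrArg (List.take u.length) h
      rwa [List.take_left, List.take_append_of_le_length hle] at h2
    have h3 : u' = u ++ u'.drop u.length := by
      calc u' = u'.take u.length ++ u'.drop u.length := (List.take_append_drop _ _).symm
        _ = u ++ u'.drop u.length := by rw [← h1]
    have h4 : u ++ v = u ++ (u'.drop u.length ++ v') := by
      rw [h]
      conv_lhs => rw [h3]
      rw [List.append_assoc]
    exact List.append_cancel_left h4

lemma vt_deletion (n : ℕ) (x y : List Bool) (hx : x.length = n) (hy : y.length = n)
    (hmod : vtSum x ≡ vtSum y [MOD n + 1]) (hne : x ≠ y) : BD x ∩ BD y = ∅ := by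
  by_contra h
  obtain ⟨z, hzx, hzy⟩ := Set.nonempty_iff_ne_empty.mpr h
  obtain ⟨u, v, b, hxe, hze⟩ := hzx
  obtain ⟨u', v', b', hye, hze'⟩ := hzy
  have hz : u ++ v = u' ++ v' := by rw [← hze, ← hze']
  rcases le_total u.length u'.length with hle | hle
  · obtain ⟨w, hu', hv⟩ := split_lists u v u' v' hz hle
    apply hne
    rw [hxe, hye, hu', hv]
    apply vt_helper
    have : (u ++ b :: (w ++ v')).length = n := by rw [← hx, hxe, hv]
    rw [this]
    rw [hxe, hye, hu', hv] at hmod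
    exact hmod
  · obtain ⟨w, hu, hv'⟩ := split_lists u' v' u v hz.symm hle
    apply hne
    apply Eq.symm
    rw [hxe, hye, hu, hv']
    apply vt_helper
    have hl : (u' ++ b' :: (w ++ v)).length = n := by rw [← hy, hye, hv']
    rw [hl]
    rw [hxe, hye, hu, hv'] at hmod
    exact hmod.symm

lemma count_true_ofFn {n : ℕ} (f : Fin n → Bool) :
    (List.ofFn f).count true = (Finset.univ.filter fun i => f i = true).card := by
  induction n with
  | zero => simp
  | succ n ih =>
    rw [List.ofFn_succ, List.count_cons, Finset.card_filter, Fin.sum_univ_succ,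
      ← Finset.card_filter, ih (fun i => f i.succ)]
    cases h : f 0 <;> simp [h] <;> omega

noncomputable def balFin (n : ℕ) : Finset (List Bool) :=
  ((Finset.univ : Finset (Fin n)).powersetCard (n / 2)).image
    (fun s => List.ofFn (fun i => decide (i ∈ s)))

lemma coe_balFin (n : ℕ) : (↑(balFin n) : Set (List Bool)) = balanced n := by
  ext x
  simp only [balFin, Finset.coe_image, Set.mem_image, Finset.mem_coe,
    Finset.mem_powersetCard, balanced, Set.mem_setOf_eq]
  constructor
  · rintro ⟨s, ⟨-, hcard⟩, rfl⟩
    refine ⟨by simp, ?_⟩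
    rw [count_true_ofFn]
    simp only [decide_eq_true_eq]
    rw [Finset.filter_mem_eq_inter, Finset.univ_inter, hcard]
  · rintro ⟨hlen, hcount⟩
    subst hlen
    refine ⟨Finset.univ.filter (fun i => x.get i = true), ⟨Finset.subset_univ _, ?_⟩, ?_⟩
    · have h := count_true_ofFn x.get
      rw [List.ofFn_get] at h
      rw [← h, hcount]
    · rw [show (fun i => decide (i ∈ Finset.univ.filter (fun i => x.get i = true)))
        = x.get from ?_]
      · exact List.ofFn_get x
      · funext i
        simp

lemma card_balFin (n : ℕ) : (balFin n).card = n.choose (n / 2) := by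
  rw [balFin, Finset.card_image_of_injOn, Finset.card_powersetCard, Finset.card_univ,
    Fintype.card_fin]
  intro s _ t _ h
  ext i
  have := congrFun (List.ofFn_injective h) i
  simpa using this

lemma BVT_eq_filter (n a : ℕ) (ha : a ≤ n) :
    BVT n a = ↑((balFin n).filter (fun x => vtSum x % (n + 1) = a)) := by
  ext x
  simp only [BVT, Set.mem_setOf_eq, Finset.coe_filter, ← coe_balFin n, Finset.mem_coe]
  have : vtSum x ≡ a [MOD n + 1] ↔ vtSum x % (n + 1) = a := by
    unfold Nat.ModEq
    rw [Nat.mod_eq_of_lt (by omega : a < n + 1)]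
  rw [this]

lemma exists_good_a (n : ℕ) :
    ∃ a ≤ n, (n.choose (n / 2) : ℕ) ≤ (n + 1) *
      ((balFin n).filter (fun x => vtSum x % (n + 1) = a)).card := by
  have hfib : (balFin n).card = ∑ a ∈ Finset.range (n + 1),
      ((balFin n).filter (fun x => vtSum x % (n + 1) = a)).card := by
    apply Finset.card_eq_sum_card_fiberwise
    intro x _
    simp only [Finset.mem_coe, Finset.mem_range]
    exact Nat.mod_lt _ (by omega)
  have hsum : ∑ _a ∈ Finset.range (n + 1), (balFin n).card ≤
      ∑ a ∈ Finset.range (n + 1), (n + 1) *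
        ((balFin n).filter (fun x => vtSum x % (n + 1) = a)).card := by
    rw [← Finset.mul_sum, ← hfib, Finset.sum_const, Finset.card_range, smul_eq_mul]
  obtain ⟨a, ha, hle⟩ := Finset.exists_le_of_sum_le ⟨0, by simp⟩ hsum
  exact ⟨a, by simpa using Nat.lt_succ_iff.mp (Finset.mem_range.mp ha), by
    rw [← card_balFin n]; exact hle⟩

/-- Theorem: some `BVT_a(n)` has size at least `C(n,n/2)/(n+1)`, and every `BVT_a(n)`
has pairwise disjoint single-deletion balls. -/
theorem stmt9 (n : ℕ) (hn : Even n) (h2 : 2 ≤ n) :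
    (∃ a : ℕ, a ≤ n ∧
      ((n.choose (n / 2) : ℕ) : ℝ) / ((n : ℝ) + 1) ≤ ((BVT n a).ncard : ℝ)) ∧
    (∀ a : ℕ, ∀ x ∈ BVT n a, ∀ y ∈ BVT n a, x ≠ y → BD x ∩ BD y = ∅) := by
  constructor
  · obtain ⟨a, ha, hle⟩ := exists_good_a n
    refine ⟨a, ha, ?_⟩
    rw [BVT_eq_filter n a ha, Set.ncard_coe_finset]
    rw [div_le_iff₀ (by positivity : (0:ℝ) < (n : ℝ) + 1)]
    calc ((n.choose (n / 2) : ℕ) : ℝ)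
        ≤ (((n + 1) * ((balFin n).filter (fun x => vtSum x % (n + 1) = a)).card : ℕ) : ℝ) := by
          exact_mod_cast hle
      _ = (((balFin n).filter (fun x => vtSum x % (n + 1) = a)).card : ℝ) * ((n : ℝ) + 1) := by
          push_cast; ring
  · intro a x hx y hy hne
    exact vt_deletion n x y hx.1.1 hy.1.1 (hx.2.trans hy.2.symm) hne

end BRC
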